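/- The quotient of the additive group (Fin 4 → ℤ) by the range of the additive homomorphism x ↦ K_{SO(8)}.mulVec x is isomorphic as an additive group to ZMod 2 × ZMod 2. In particular every element of the quotient satisfies x + x = 0 and the quotient has exactly 4 elements. -/

import Mathlib

open Matrix

/-- The K-matrix of the `efmf` surface topological order: the Cartan matrix of
SO(8) (type D4), over ℤ. -/
def KSO8 : Matrix (Fin 4) (Fin 4) ℤ :=
  !![2, -1, -1, -1;
     -1, 2, 0, 0;
     -1, 0, 2, 0;
     -1, 0, 0, 2]

/-- Auxiliary homomorphism detecting the quotient. -/
def phiK : (Fin 4 → ℤ) →+ ZMod 2 × ZMod 2 where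
  toFun x := (((x 1 + x 2 : ℤ) : ZMod 2), ((x 1 + x 3 : ℤ) : ZMod 2))
  map_zero' := by simp
  map_add' x y := by
    simp only [Pi.add_apply, Prod.mk_add_mk, Prod.mk.injEq]
    constructor <;> push_cast <;> ring

lemma KSO8_mulVec (y : Fin 4 → ℤ) :
    KSO8.mulVec y = ![2 * y 0 - y 1 - y 2 - y 3, -y 0 + 2 * y 1,
      -y 0 + 2 * y 2, -y 0 + 2 * y 3] := by
  funext i
  fin_cases i <;>
    simp [KSO8, Matrix.mulVec, dotProduct, Fin.sum_univ_four, Matrix.vecHead, Matrix.vecTail] <;> ring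

lemma KSO8_range_eq_ker :
    (KSO8.mulVecLin.toAddMonoidHom).range = phiK.ker := by
  ext x
  simp only [AddMonoidHom.mem_range, AddMonoidHom.mem_ker, LinearMap.toAddMonoidHom_coe,
    Matrix.mulVecLin_apply]
  constructor
  · rintro ⟨y, rfl⟩
    rw [KSO8_mulVec]
    simp only [phiK, AddMonoidHom.coe_mk, ZeroHom.coe_mk]
    have h1 : (-y 0 + 2 * y 1) + (-y 0 + 2 * y 2) = 2 * (y 1 + y 2 - y 0) := by ring
    have h2 : (-y 0 + 2 * y 1) + (-y 0 + 2 * y 3) = 2 * (y 1 + y 3 - y 0) := by ring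
    have : (![2 * y 0 - y 1 - y 2 - y 3, -y 0 + 2 * y 1, -y 0 + 2 * y 2, -y 0 + 2 * y 3] :
        Fin 4 → ℤ) 1 = -y 0 + 2 * y 1 := rfl
    simp only [Matrix.cons_val_one, Matrix.head_cons, Matrix.cons_val_two, Matrix.tail_cons,
      Matrix.cons_val_three, Matrix.cons_val_zero]
    rw [Prod.mk_eq_zero]
    constructor
    · rw [h1]; exact (ZMod.intCast_zmod_eq_zero_iff_dvd _ 2).2 ⟨_, rfl⟩
    · rw [h2]; exact (ZMod.intCast_zmod_eq_zero_iff_dvd _ 2).2 ⟨_, rfl⟩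
  · intro h
    simp only [phiK, AddMonoidHom.coe_mk, ZeroHom.coe_mk, Prod.mk_eq_zero] at h
    obtain ⟨ha, hb⟩ := h
    rw [ZMod.intCast_zmod_eq_zero_iff_dvd] at ha hb
    obtain ⟨a, ha⟩ := ha
    obtain ⟨b, hb⟩ := hb
    refine ⟨![2 * x 0 + x 1 + x 2 + x 3, x 0 + a + b, x 0 + x 2 + b, x 0 + x 3 + a], ?_⟩
    rw [KSO8_mulVec]
    funext i
    fin_cases i <;> simp <;> omega

lemma phiK_surjective : Function.Surjective phiK := by
  intro p
  obtain ⟨u, v⟩ := p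
  refine ⟨![0, 0, (u.val : ℤ), (v.val : ℤ)], ?_⟩
  simp [phiK, ZMod.natCast_val, ZMod.intCast_cast, ZMod.cast_id]

theorem KSO8_anyon_group :
    Nonempty
      (((Fin 4 → ℤ) ⧸ (KSO8.mulVecLin.toAddMonoidHom).range) ≃+ ZMod 2 × ZMod 2) ∧
    (∀ x : (Fin 4 → ℤ) ⧸ (KSO8.mulVecLin.toAddMonoidHom).range, x + x = 0) ∧
    Nat.card ((Fin 4 → ℤ) ⧸ (KSO8.mulVecLin.toAddMonoidHom).range) = 4 := by
  have e : ((Fin 4 → ℤ) ⧸ (KSO8.mulVecLin.toAddMonoidHom).range) ≃+ ZMod 2 × ZMod 2 := by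
    rw [KSO8_range_eq_ker]
    exact QuotientAddGroup.quotientKerEquivOfSurjective phiK phiK_surjective
  refine ⟨⟨e⟩, ?_, ?_⟩
  · intro x
    apply e.injective
    rw [map_add, map_zero]
    revert x
    intro x
    exact (by decide : ∀ a : ZMod 2 × ZMod 2, a + a = 0) (e x)
  · rw [Nat.card_congr e.toEquiv]
    simp [Nat.card_eq_fintype_card]
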